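/- Let a < b be real numbers, let p ≥ 1 be an integer, and let h > 0 be such that (b−a)/(2h) is a positive integer and 2·h·p < b−a. Then there exists a non-constant spline u_{p,h} ∈ S̃_{p,h}(a,b) such that |u_{p,h}|_{H¹(a,b)} ≥ (1/(2√2)) · h^{−1} · ‖u_{p,h}‖_{L²(a,b)}; i.e., the inverse inequality on S̃_{p,h}(a,b) is sharp up to a constant. -/

import Mathlib

open MeasureTheory Set

/-- The `L²(a,b)` norm of a function. -/
noncomputable def L2 (a b : ℝ) (v : ℝ → ℝ) : ℝ :=
  Real.sqrt (∫ x in Set.Ioo a b, v x ^ 2)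

/-- `u` belongs to the spline space `S_{p,h}(a,b)` of maximum smoothness
(`u` is `(p-1)`-times continuously differentiable on `[a,b]` and coincides with a
polynomial of degree at most `p` on each of the `n = (b-a)/h` subintervals). -/
def IsSplineOn (p n : ℕ) (h a b : ℝ) (u : ℝ → ℝ) : Prop :=
  ContDiffOn ℝ (p - 1 : ℕ) u (Set.Icc a b) ∧
  ∀ j < n, ∃ P : Polynomial ℝ, P.natDegree ≤ p ∧
    ∀ x ∈ Set.Icc (a + j * h) (a + (j + 1) * h), u x = P.eval x

/-- `u ∈ H¹(a,b)` with weak derivative `g`: `u` is absolutely continuous on `[a,b]`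
(an indefinite integral of the locally integrable `g`) and `g` is square-integrable. -/
def IsH1On (a b : ℝ) (u g : ℝ → ℝ) : Prop :=
  IntervalIntegrable g volume a b ∧
  (∀ x ∈ Set.Icc a b, u x = u a + ∫ t in a..x, g t) ∧
  IntegrableOn (fun x => g x ^ 2) (Set.Ioo a b)

/-- The reduced spline space `S̃_{p,h}(a,b)`: splines whose odd derivatives of order
`< p` vanish at both endpoints. -/
def IsReducedSplineOn (p n : ℕ) (h a b : ℝ) (u : ℝ → ℝ) : Prop :=
  IsSplineOn p n h a b u ∧
  ∀ l : ℕ, 2 * l + 1 < p →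
    iteratedDerivWithin (2 * l + 1) u (Set.Icc a b) a = 0 ∧
    iteratedDerivWithin (2 * l + 1) u (Set.Icc a b) b = 0

open intervalIntegral Polynomial

set_option linter.unusedTactic false
set_option linter.unreachableTactic false



noncomputable def sqw (a h d : ℝ) (x : ℝ) : ℝ := (-1 : ℝ) ^ ⌊(x - a + d) / (2 * h)⌋

def sqwKnots (a h d : ℝ) : Set ℝ := Set.range (fun k : ℤ => a - d + k * (2 * h))

lemma neg_one_zpow_or (k : ℤ) : (-1 : ℝ) ^ k = 1 ∨ (-1 : ℝ) ^ k = -1 := by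
  rcases Int.even_or_odd k with hk | hk
  · exact Or.inl hk.neg_one_zpow
  · exact Or.inr hk.neg_one_zpow

lemma sqw_or (a h d x : ℝ) : sqw a h d x = 1 ∨ sqw a h d x = -1 := neg_one_zpow_or _

lemma sqw_sq (a h d x : ℝ) : (sqw a h d x) ^ 2 = 1 := by
  rcases sqw_or a h d x with hx | hx <;> rw [hx] <;> norm_num

lemma sqw_ne_zero (a h d x : ℝ) : sqw a h d x ≠ 0 := by
  rcases sqw_or a h d x with hx | hx <;> rw [hx] <;> norm_num

lemma sqw_abs_le (a h d x : ℝ) : ‖sqw a h d x‖ ≤ 1 := by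
  rcases sqw_or a h d x with hx | hx <;> rw [hx] <;> norm_num

lemma sqw_measurable (a h d : ℝ) : Measurable (sqw a h d) := by
  have h1 : Measurable fun x : ℝ => ⌊(x - a + d) / (2 * h)⌋ :=
    (((measurable_id.sub_const a).add_const d).div_const _).floor
  exact (measurable_from_top (f := fun k : ℤ => (-1 : ℝ) ^ k)).comp h1

lemma sqw_intervalIntegrable (a h d : ℝ) (u v : ℝ) :
    IntervalIntegrable (sqw a h d) volume u v := by
  rw [intervalIntegrable_iff]
  refine Integrable.mono' (g := fun _ => (1 : ℝ)) ?_ (sqw_measurable a h d).aestronglyMeasurable ?_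
  · exact integrableOn_const measure_Ioc_lt_top.ne
  · filter_upwards with x using sqw_abs_le a h d x

lemma sqw_anti (a h d : ℝ) (hh : 0 < h) (x : ℝ) :
    sqw a h d (x + 2 * h) = - sqw a h d x := by
  unfold sqw
  have h2 : (x + 2 * h - a + d) / (2 * h) = (x - a + d) / (2 * h) + 1 := by
    field_simp; ring
  rw [h2, Int.floor_add_one, zpow_add_one₀ (by norm_num : (-1:ℝ) ≠ 0)]
  ring

lemma mem_sqwKnots_iff (a h d x : ℝ) (hh : 0 < h) :
    x ∈ sqwKnots a h d ↔ ∃ k : ℤ, (x - a + d) / (2 * h) = k := by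
  constructor
  · rintro ⟨k, rfl⟩
    exact ⟨k, by field_simp; ring⟩
  · rintro ⟨k, hk⟩
    have h2 : x - a + d = k * (2 * h) := by
      field_simp at hk; linarith
    exact ⟨k, by simp only []; linarith⟩

lemma sqwKnots_countable (a h d : ℝ) : (sqwKnots a h d).Countable :=
  Set.countable_range _

lemma floor_neg_of_not_int {t : ℝ} (ht : ∀ k : ℤ, t ≠ k) : ⌊-t⌋ = -⌊t⌋ - 1 := by
  have h1 : (⌊t⌋ : ℝ) ≤ t := Int.floor_le t
  have h2 : t < ⌊t⌋ + 1 := Int.lt_floor_add_one t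
  have h3 : (⌊t⌋ : ℝ) < t := lt_of_le_of_ne h1 (fun hc => ht ⌊t⌋ hc.symm)
  rw [Int.floor_eq_iff]
  constructor <;> push_cast <;> linarith



section
variable (a h d : ℝ)



variable {a h d}

lemma not_int_of_not_knot (hh : 0 < h) {x : ℝ} (hx : x ∉ sqwKnots a h d) :
    ∀ k : ℤ, (x - a + d) / (2 * h) ≠ k := by
  intro k hk
  exact hx ((mem_sqwKnots_iff a h d x hh).mpr ⟨k, hk⟩)

lemma sqw_refl0 (hh : 0 < h) {x : ℝ} (hx : x ∉ sqwKnots a h 0) :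
    sqw a h 0 (2 * a - x) = - sqw a h 0 x := by
  unfold sqw
  have ht := not_int_of_not_knot hh hx
  have h2 : (2 * a - x - a + 0) / (2 * h) = -((x - a + 0) / (2 * h)) := by ring
  rw [h2, floor_neg_of_not_int ht, zpow_sub_one₀ (by norm_num : (-1:ℝ) ≠ 0), zpow_neg]
  rcases Int.even_or_odd ⌊(x - a + 0) / (2 * h)⌋ with hk | hk
  · rw [hk.neg_one_zpow]; norm_num
  · rw [hk.neg_one_zpow]; norm_num

lemma sqw_reflh (hh : 0 < h) {x : ℝ} (hx : x ∉ sqwKnots a h h) :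
    sqw a h h (2 * a - x) = sqw a h h x := by
  unfold sqw
  have ht := not_int_of_not_knot hh hx
  have h2 : (2 * a - x - a + h) / (2 * h) = -((x - a + h) / (2 * h)) + 1 := by
    field_simp; ring
  rw [h2, Int.floor_add_one, floor_neg_of_not_int ht]
  have : -⌊(x - a + h) / (2 * h)⌋ - 1 + 1 = -⌊(x - a + h) / (2 * h)⌋ := by ring
  rw [this, zpow_neg]
  rcases Int.even_or_odd ⌊(x - a + h) / (2 * h)⌋ with hk | hk
  · rw [hk.neg_one_zpow]; norm_num
  · rw [hk.neg_one_zpow]; norm_num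

/-- floors are constant on half-open half-integer intervals -/
lemma floor_const_on_half {m : ℤ} : ∃ k : ℤ, ∀ t : ℝ,
    (m : ℝ) / 2 ≤ t → t < ((m : ℝ) + 1) / 2 → ⌊t⌋ = k := by
  rcases Int.even_or_odd m with ⟨r, hr⟩ | ⟨r, hr⟩
  · refine ⟨r, fun t h1 h2 => ?_⟩
    rw [Int.floor_eq_iff]
    have : (m : ℝ) = 2 * r := by push_cast [hr]; ring
    constructor <;> push_cast <;> linarith
  · refine ⟨r, fun t h1 h2 => ?_⟩
    rw [Int.floor_eq_iff]
    have : (m : ℝ) = 2 * r + 1 := by push_cast [hr]; ring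
    constructor <;> push_cast <;> linarith

lemma sqw_piece (hh : 0 < h) {c : ℤ} (hd : d = c * h) (j : ℕ) :
    ∀ x ∈ Ico (a + (j : ℝ) * h) (a + ((j : ℝ) + 1) * h),
      sqw a h d x = sqw a h d (a + (j : ℝ) * h) := by
  intro x hx
  obtain ⟨k, hk⟩ := floor_const_on_half (m := (j : ℤ) + c)
  have e1 : ∀ y : ℝ, a + (j:ℝ) * h ≤ y → y < a + ((j:ℝ) + 1) * h →
      ⌊(y - a + d) / (2 * h)⌋ = k := by
    intro y hy1 hy2
    apply hk
    · rw [div_le_div_iff₀ (by norm_num) (by linarith)]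
      push_cast [hd]; linarith
    · rw [div_lt_div_iff₀ (by linarith) (by norm_num)]
      push_cast [hd]; linarith
  unfold sqw
  rw [e1 x hx.1 hx.2, e1 (a + (j:ℝ) * h) le_rfl (by nlinarith)]

lemma sqw_continuousAt (hh : 0 < h) {x : ℝ} (hx : x ∉ sqwKnots a h d) :
    ContinuousAt (sqw a h d) x := by
  set t := (x - a + d) / (2 * h) with htdef
  have ht := not_int_of_not_knot hh hx
  have h1 : (⌊t⌋ : ℝ) < t := lt_of_le_of_ne (Int.floor_le t) (fun hc => ht ⌊t⌋ hc.symm)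
  have h2 : t < ⌊t⌋ + 1 := Int.lt_floor_add_one t
  have hcont : Continuous fun y : ℝ => (y - a + d) / (2 * h) := by continuity
  have hmem : (fun y : ℝ => (y - a + d) / (2 * h)) ⁻¹' (Ioo ((⌊t⌋ : ℝ)) ((⌊t⌋ : ℝ) + 1)) ∈ nhds x :=
    hcont.continuousAt.preimage_mem_nhds (Ioo_mem_nhds h1 h2)
  have heq : sqw a h d =ᶠ[nhds x] fun _ => (-1 : ℝ) ^ ⌊t⌋ := by
    filter_upwards [hmem] with y hy
    unfold sqw
    rw [Int.floor_eq_iff.mpr ⟨le_of_lt hy.1, hy.2⟩]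
  exact continuousAt_const.congr heq.symm

end



noncomputable def U (a h : ℝ) (f : ℝ → ℝ) : ℕ → ℝ → ℝ
  | 0 => f
  | m + 1 => fun x =>
      (∫ t in a..x, U a h f m t) - (∫ t in a..(a + 2 * h), U a h f m t) / 2

section
variable {a h : ℝ} {f : ℝ → ℝ} {e : ℝ}

lemma Ucont (hfi : ∀ u v, IntervalIntegrable f volume u v) (m : ℕ) :
    Continuous (U a h f (m + 1)) := by
  induction m with
  | zero =>
    exact (intervalIntegral.continuous_primitive hfi a).sub continuous_const
  | succ k ih =>
    exact (intervalIntegral.continuous_primitive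
      (fun u v => ih.intervalIntegrable u v) a).sub continuous_const

lemma UInt (hfi : ∀ u v, IntervalIntegrable f volume u v) (m : ℕ) (u v : ℝ) :
    IntervalIntegrable (U a h f m) volume u v := by
  cases m with
  | zero => exact hfi u v
  | succ k => exact (Ucont hfi k).intervalIntegrable u v

lemma Umeas (hfi : ∀ u v, IntervalIntegrable f volume u v) (hfm : Measurable f) (m : ℕ) :
    Measurable (U a h f m) := by
  cases m with
  | zero => exact hfm
  | succ k => exact (Ucont hfi k).measurable

lemma UhasDeriv (hfi : ∀ u v, IntervalIntegrable f volume u v) (hfm : Measurable f)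
    (m : ℕ) (x : ℝ) (hc : ContinuousAt (U a h f m) x) :
    HasDerivAt (U a h f (m + 1)) (U a h f m x) x := by
  have h1 : HasDerivAt (fun y => ∫ t in a..y, U a h f m t) (U a h f m x) x :=
    intervalIntegral.integral_hasDerivAt_right (UInt hfi m a x)
      ((Umeas hfi hfm m).stronglyMeasurable.stronglyMeasurableAtFilter) hc
  exact h1.sub_const _

lemma UhasDeriv' (hfi : ∀ u v, IntervalIntegrable f volume u v) (hfm : Measurable f)
    (m : ℕ) (x : ℝ) :
    HasDerivAt (U a h f (m + 2)) (U a h f (m + 1) x) x :=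
  UhasDeriv hfi hfm (m + 1) x ((Ucont hfi m).continuousAt)

lemma Uderiv (hfi : ∀ u v, IntervalIntegrable f volume u v) (hfm : Measurable f) (m : ℕ) :
    deriv (U a h f (m + 2)) = U a h f (m + 1) :=
  funext fun x => (UhasDeriv' hfi hfm m x).deriv

lemma UcontDiff (hfi : ∀ u v, IntervalIntegrable f volume u v) (hfm : Measurable f) (m : ℕ) :
    ContDiff ℝ (m : ℕ) (U a h f (m + 1)) := by
  induction m with
  | zero => exact contDiff_zero.mpr (Ucont hfi 0)
  | succ k ih =>
    have hcast : ((k + 1 : ℕ) : WithTop ℕ∞) = (k : ℕ) + 1 := by push_cast; rfl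
    rw [hcast, contDiff_succ_iff_deriv]
    refine ⟨fun x => (UhasDeriv' hfi hfm k x).differentiableAt, ?_, ?_⟩
    · intro hc; simp at hc
    · rw [Uderiv hfi hfm k]; exact ih

lemma Uanti (hfi : ∀ u v, IntervalIntegrable f volume u v)
    (hfa : ∀ x, f (x + 2 * h) = - f x) (m : ℕ) (x : ℝ) :
    U a h f m (x + 2 * h) = - U a h f m x := by
  induction m generalizing x with
  | zero => exact hfa x
  | succ k ih =>
    show (∫ t in a..(x + 2*h), U a h f k t) - _ / 2 = -((∫ t in a..x, U a h f k t) - _ / 2)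
    have split : (∫ t in a..(x + 2*h), U a h f k t) =
        (∫ t in a..(a + 2*h), U a h f k t) + ∫ t in (a + 2*h)..(x + 2*h), U a h f k t :=
      (integral_add_adjacent_intervals (UInt hfi k _ _) (UInt hfi k _ _)).symm
    have comp : (∫ t in (a + 2*h)..(x + 2*h), U a h f k t) =
        ∫ t in a..x, U a h f k (t + 2 * h) :=
      (integral_comp_add_right _ _).symm
    have neg : (∫ t in a..x, U a h f k (t + 2 * h)) = - ∫ t in a..x, U a h f k t := by
      simp only [ih]; exact intervalIntegral.integral_neg
    rw [split, comp, neg]; ring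

lemma UantiN (hfi : ∀ u v, IntervalIntegrable f volume u v)
    (hfa : ∀ x, f (x + 2 * h) = - f x) (m : ℕ) (k : ℕ) (x : ℝ) :
    U a h f m (x + k * (2 * h)) = (-1 : ℝ) ^ k * U a h f m x := by
  induction k with
  | zero => simp
  | succ j ih =>
    have e1 : x + ((j : ℝ) + 1) * (2 * h) = (x + j * (2 * h)) + 2 * h := by ring
    push_cast
    rw [e1, Uanti hfi hfa, ih]
    ring

lemma reflIntegral (g : ℝ → ℝ) (x : ℝ) :
    (∫ t in a..(2 * a - x), g t) = - ∫ t in a..x, g (2 * a - t) := by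
  have h1 := integral_comp_sub_left (a := a) (b := x) g (2 * a)
  have e1 : 2 * a - a = a := by ring
  rw [e1] at h1
  rw [h1, integral_symm]

lemma oddCenterIntegralZero (g : ℝ → ℝ) (c r : ℝ)
    (hodd : ∀ x, g (2 * c - x) = - g x) :
    (∫ t in (c - r)..(c + r), g t) = 0 := by
  have h1 := integral_comp_sub_left (a := c - r) (b := c + r) g (2 * c)
  simp only [hodd] at h1
  rw [intervalIntegral.integral_neg] at h1
  have e1 : 2 * c - (c + r) = c - r := by ring
  have e2 : 2 * c - (c - r) = c + r := by ring
  rw [e1, e2] at h1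
  linarith

end




section
variable {a h : ℝ} {f : ℝ → ℝ} {e : ℝ}


/-- the key parity lemma -/
lemma Uparity (hfi : ∀ u v, IntervalIntegrable f volume u v)
    (hfa : ∀ x, f (x + 2 * h) = - f x)
    (he : e = 1 ∨ e = -1)
    (hfr : ∀ᵐ x : ℝ, f (2 * a - x) = e * f x)
    (hfz : e = 1 → (∫ t in a..(a + 2 * h), f t) = 0)
    (m : ℕ) (x : ℝ) :
    U a h f (m + 1) (2 * a - x) = (e * (-1 : ℝ) ^ (m + 1)) * U a h f (m + 1) x := by
  induction m generalizing x with
  | zero =>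
    show (∫ t in a..(2*a - x), f t) - (∫ t in a..(a + 2*h), f t) / 2
        = (e * (-1 : ℝ) ^ 1) * ((∫ t in a..x, f t) - (∫ t in a..(a + 2*h), f t) / 2)
    rw [reflIntegral]
    have hcongr : (∫ t in a..x, f (2 * a - t)) = ∫ t in a..x, e * f t := by
      apply intervalIntegral.integral_congr_ae
      filter_upwards [hfr] with t ht _ using ht
    rw [hcongr, intervalIntegral.integral_const_mul]
    rcases he with rfl | rfl
    · rw [hfz rfl]; ring
    · ring
  | succ k ih =>
    have hE : e * (-1 : ℝ) ^ (k + 1) = 1 ∨ e * (-1 : ℝ) ^ (k + 1) = -1 := by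
      rcases he with rfl | rfl <;> rcases Nat.even_or_odd (k + 1) with hk | hk <;>
        simp [hk.neg_one_pow, hk.neg_one_pow] <;> first | left; ring | right; ring
    show (∫ t in a..(2*a - x), U a h f (k+1) t) - (∫ t in a..(a + 2*h), U a h f (k+1) t) / 2
        = _ * ((∫ t in a..x, U a h f (k+1) t) - (∫ t in a..(a + 2*h), U a h f (k+1) t) / 2)
    rw [reflIntegral]
    have hcongr : (∫ t in a..x, U a h f (k+1) (2 * a - t))
        = ∫ t in a..x, (e * (-1 : ℝ) ^ (k + 1)) * U a h f (k+1) t := by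
      apply intervalIntegral.integral_congr
      intro t _
      exact ih t
    rw [hcongr, intervalIntegral.integral_const_mul]
    rcases hE with hE1 | hE1
    · -- U (k+1) is even about a, hence odd about a+h, so the period integral vanishes
      have hodd : ∀ y, U a h f (k+1) (2 * (a + h) - y) = - U a h f (k+1) y := by
        intro y
        have e1 : 2 * (a + h) - y = (2 * a - (y - 2 * h)) := by ring
        rw [e1, ih (y - 2*h), hE1, one_mul]
        have e2 : y - 2 * h + 2 * h = y := by ring
        have := Uanti (a := a) hfi hfa (k+1) (y - 2*h)
        rw [e2] at this
        linarith
      have hz : (∫ t in a..(a + 2*h), U a h f (k+1) t) = 0 := by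
        have := oddCenterIntegralZero (U a h f (k+1)) (a + h) h hodd
        have e1 : a + h - h = a := by ring
        have e2 : a + h + h = a + 2 * h := by ring
        rwa [e1, e2] at this
      rw [hz, hE1]
      have e3 : e * (-1:ℝ) ^ (k + 1 + 1) = -1 := by
        rw [pow_succ]; rw [mul_comm ((-1:ℝ)^(k+1)) (-1), ← mul_assoc] at *
        nlinarith [hE1]
      rw [e3]; ring
    · rw [hE1]
      have e3 : e * (-1:ℝ) ^ (k + 1 + 1) = 1 := by
        have : e * (-1:ℝ) ^ (k+1+1) = (e * (-1)^(k+1)) * (-1) := by ring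
        rw [this, hE1]; ring
      rw [e3]; ring

end





/-- polynomial antiderivative -/
noncomputable def pAnti (P : Polynomial ℝ) : Polynomial ℝ :=
  P.sum fun n c => Polynomial.C (c / (n + 1)) * Polynomial.X ^ (n + 1)

lemma pAnti_derivative (P : Polynomial ℝ) : (pAnti P).derivative = P := by
  unfold pAnti
  rw [Polynomial.sum, map_sum]
  conv_rhs => rw [← Polynomial.sum_C_mul_X_pow_eq P, Polynomial.sum]
  apply Finset.sum_congr rfl
  intro n _
  rw [Polynomial.derivative_C_mul_X_pow, Nat.add_sub_cancel]
  congr 2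
  push_cast
  exact div_mul_cancel₀ _ (by positivity)

lemma pAnti_natDegree (P : Polynomial ℝ) : (pAnti P).natDegree ≤ P.natDegree + 1 := by
  unfold pAnti
  rw [Polynomial.sum]
  apply Polynomial.natDegree_sum_le_of_forall_le
  intro n hn
  exact le_trans (Polynomial.natDegree_C_mul_X_pow_le _ _)
    (Nat.succ_le_succ (Polynomial.le_natDegree_of_mem_supp n hn))

lemma integral_const_on_Ico {f : ℝ → ℝ} {L R x c : ℝ}
    (hf : ∀ t ∈ Ico L R, f t = c) (hLx : L ≤ x) (hxR : x ≤ R) :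
    (∫ t in L..x, f t) = c * (x - L) := by
  have hcongr : (∫ t in L..x, f t) = ∫ t in L..x, c := by
    apply intervalIntegral.integral_congr_ae
    have hR : ∀ᵐ t : ℝ, t ∉ ({R} : Set ℝ) :=
      measure_eq_zero_iff_ae_notMem.mp (measure_singleton R)
    filter_upwards [hR] with t htR hmem
    rw [Set.uIoc_of_le hLx] at hmem
    apply hf
    refine ⟨le_of_lt hmem.1, lt_of_le_of_ne (le_trans hmem.2 hxR) ?_⟩
    simpa using htR
  rw [hcongr, intervalIntegral.integral_const, smul_eq_mul]
  ring

section
variable {a h : ℝ} {f : ℝ → ℝ}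

lemma Udiff (hfi : ∀ u v, IntervalIntegrable f volume u v) (m : ℕ) (z x : ℝ) :
    U a h f (m + 1) x - U a h f (m + 1) z = ∫ t in z..x, U a h f m t := by
  show ((∫ t in a..x, U a h f m t) - _/2) - ((∫ t in a..z, U a h f m t) - _/2) = _
  have := intervalIntegral.integral_interval_sub_left (UInt (a:=a) (h:=h) hfi m a x) (UInt (a:=a) (h:=h) hfi m a z)
  linarith [this]

/-- on each grid interval, `U (m+1)` is a polynomial of degree `≤ m+1` -/
lemma Upoly (hfi : ∀ u v, IntervalIntegrable f volume u v)
    (hpc : ∀ (j : ℕ), ∀ x ∈ Ico (a + (j : ℝ) * h) (a + ((j : ℝ) + 1) * h),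
      f x = f (a + (j : ℝ) * h))
    (hh : 0 < h) (m : ℕ) (j : ℕ) :
    ∃ P : Polynomial ℝ, P.natDegree ≤ m + 1 ∧
      ∀ x ∈ Icc (a + (j : ℝ) * h) (a + ((j : ℝ) + 1) * h), U a h f (m + 1) x = P.eval x := by
  set L := a + (j : ℝ) * h with hL
  set R := a + ((j : ℝ) + 1) * h with hR
  have hLR : L ≤ R := by rw [hL, hR]; nlinarith
  induction m with
  | zero =>
    refine ⟨Polynomial.C (U a h f 1 L - f L * L) + Polynomial.C (f L) * Polynomial.X, ?_, ?_⟩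
    · apply le_trans (Polynomial.natDegree_add_le _ _)
      rw [max_le_iff]
      constructor
      · exact (Polynomial.natDegree_C _).le.trans (by omega)
      · exact le_trans (Polynomial.natDegree_C_mul_le _ _) (by simp)
    · intro x hx
      have h1 : U a h f 1 x - U a h f 1 L = ∫ t in L..x, f t := Udiff hfi 0 L x
      have h2 : (∫ t in L..x, f t) = f L * (x - L) :=
        integral_const_on_Ico (hpc j) hx.1 hx.2
      simp only [Polynomial.eval_add, Polynomial.eval_C, Polynomial.eval_mul, Polynomial.eval_X]
      linarith
  | succ k ih =>
    obtain ⟨P, hPdeg, hP⟩ := ih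
    set Q := pAnti P with hQ
    refine ⟨Q + Polynomial.C (U a h f (k + 2) L - Q.eval L), ?_, ?_⟩
    · apply le_trans (Polynomial.natDegree_add_le _ _)
      simp only [Polynomial.natDegree_C, max_le_iff]
      exact ⟨le_trans (pAnti_natDegree P) (by omega), by omega⟩
    · intro x hx
      have h1 : U a h f (k + 2) x - U a h f (k + 2) L = ∫ t in L..x, U a h f (k + 1) t :=
        Udiff hfi (k + 1) L x
      have h2 : (∫ t in L..x, U a h f (k + 1) t) = ∫ t in L..x, P.eval t := by
        apply intervalIntegral.integral_congr
        intro t ht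
        rw [Set.uIcc_of_le hx.1] at ht
        exact hP t ⟨ht.1, le_trans ht.2 hx.2⟩
      have h3 : (∫ t in L..x, P.eval t) = Q.eval x - Q.eval L := by
        apply intervalIntegral.integral_eq_sub_of_hasDerivAt
        · intro t _
          have := Q.hasDerivAt t
          rwa [hQ, pAnti_derivative] at this
        · exact (Polynomial.continuous P).intervalIntegrable L x
      simp only [Polynomial.eval_add, Polynomial.eval_C]
      linarith
end



lemma sq_integral_le {f : ℝ → ℝ} {z x : ℝ} (hzx : z ≤ x)
    (hf : IntervalIntegrable f volume z x)
    (hf2 : IntervalIntegrable (fun t => f t ^ 2) volume z x) :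
    (∫ t in z..x, f t) ^ 2 ≤ (x - z) * ∫ t in z..x, f t ^ 2 := by
  rcases eq_or_lt_of_le hzx with rfl | hlt
  · simp
  set L := x - z with hLdef
  have hL : 0 < L := by simp [hLdef]; linarith
  set A := ∫ t in z..x, f t with hA
  set B := ∫ t in z..x, f t ^ 2 with hB
  set c := A / L with hc
  have key : 0 ≤ ∫ t in z..x, (f t - c) ^ 2 :=
    intervalIntegral.integral_nonneg hzx (fun t _ => sq_nonneg _)
  have hsum : IntervalIntegrable (fun t => f t ^ 2 - 2 * c * f t) volume z x :=
    hf2.sub (hf.const_mul (2 * c))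
  have e0 : ∀ t : ℝ, (f t - c) ^ 2 = (f t ^ 2 - 2 * c * f t) + c ^ 2 := fun t => by ring
  have e1 : (∫ t in z..x, (f t - c) ^ 2)
      = B - 2 * c * A + c ^ 2 * L := by
    simp only [e0]
    rw [intervalIntegral.integral_add hsum intervalIntegrable_const,
      intervalIntegral.integral_sub hf2 (hf.const_mul (2 * c)),
      intervalIntegral.integral_const_mul, intervalIntegral.integral_const, smul_eq_mul]
    ring
  rw [e1] at key
  have hcL : c * L = A := div_mul_cancel₀ _ hL.ne'
  have e2 : c ^ 2 * L = c * A := by rw [pow_two, mul_assoc, hcL]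
  rw [e2] at key
  -- key : 0 ≤ B - 2 * c * A + c * A, i.e. c * A ≤ B
  have h3 : c * A ≤ B := by linarith
  have h4 : A ^ 2 = (c * A) * L := by rw [mul_comm c A, mul_assoc, hcL, pow_two]
  rw [h4]
  calc (c * A) * L ≤ B * L := mul_le_mul_of_nonneg_right h3 hL.le
  _ = L * B := by ring





section
variable {a h : ℝ} {f : ℝ → ℝ}

lemma cellBound (hfi : ∀ u v, IntervalIntegrable f volume u v) (hh : 0 < h) (m k : ℕ)
    (hint2 : ∀ u v, IntervalIntegrable (fun t => U a h f m t ^ 2) volume u v)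
    (hzero : U a h f (m + 1) (a + (k : ℝ) * (2 * h) + h) = 0) :
    (∫ x in (a + (k : ℝ) * (2 * h))..(a + ((k : ℝ) + 1) * (2 * h)), U a h f (m + 1) x ^ 2)
      ≤ 2 * h ^ 2 * ∫ x in (a + (k : ℝ) * (2 * h))..(a + ((k : ℝ) + 1) * (2 * h)),
          U a h f m x ^ 2 := by
  set c := a + (k : ℝ) * (2 * h) with hc
  set z := c + h with hz
  set R := a + ((k : ℝ) + 1) * (2 * h) with hR
  have hzR : R = c + 2 * h := by rw [hR, hc]; ring
  have hcR : c ≤ R := by rw [hzR]; linarith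
  set B := ∫ x in c..R, U a h f m x ^ 2 with hB
  have hBnn : 0 ≤ B :=
    intervalIntegral.integral_nonneg hcR (fun t _ => sq_nonneg _)
  have hmono : ∀ u v : ℝ, c ≤ u → u ≤ v → v ≤ R →
      (∫ t in u..v, U a h f m t ^ 2) ≤ B := by
    intro u v h1 h2 h3
    exact intervalIntegral.integral_mono_interval h1 h2 h3
      (Filter.Eventually.of_forall (fun t => sq_nonneg _)) (hint2 c R)
  have hpt : ∀ x ∈ Icc c R, U a h f (m + 1) x ^ 2 ≤ h * B := by
    intro x hx
    have hval : U a h f (m + 1) x = ∫ t in z..x, U a h f m t := by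
      have := Udiff (a:=a) (h:=h) hfi m z x
      rw [hzero] at this
      linarith
    rcases le_total z x with hzx | hxz
    · rw [hval]
      calc (∫ t in z..x, U a h f m t) ^ 2
          ≤ (x - z) * ∫ t in z..x, U a h f m t ^ 2 :=
            sq_integral_le hzx (UInt (a:=a) (h:=h) hfi m z x) (hint2 z x)
        _ ≤ h * B := by
            apply mul_le_mul
            · rw [hz]; have := hx.2; rw [hzR] at this; linarith
            · exact hmono z x (by rw [hz]; linarith) hzx (by rw [hzR] at hx ⊢; exact hx.2)
            · exact intervalIntegral.integral_nonneg hzx (fun t _ => sq_nonneg _)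
            · linarith
    · rw [hval, intervalIntegral.integral_symm, neg_sq]
      calc (∫ t in x..z, U a h f m t) ^ 2
          ≤ (z - x) * ∫ t in x..z, U a h f m t ^ 2 :=
            sq_integral_le hxz (UInt (a:=a) (h:=h) hfi m x z) (hint2 x z)
        _ ≤ h * B := by
            apply mul_le_mul
            · have := hx.1; rw [hz]; linarith
            · exact hmono x z hx.1 hxz (by rw [hz, hzR]; linarith)
            · exact intervalIntegral.integral_nonneg hxz (fun t _ => sq_nonneg _)
            · linarith
  calc (∫ x in c..R, U a h f (m + 1) x ^ 2)
      ≤ ∫ _x in c..R, h * B := by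
        apply intervalIntegral.integral_mono_on hcR ?_ intervalIntegrable_const hpt
        exact (((Ucont (a:=a) (h:=h) hfi m).pow 2).intervalIntegrable c R)
    _ = 2 * h ^ 2 * B := by
        rw [intervalIntegral.integral_const, smul_eq_mul, hzR]
        ring
end





section
variable {a h : ℝ} {f : ℝ → ℝ}

lemma totalBound (hfi : ∀ u v, IntervalIntegrable f volume u v) (hh : 0 < h) (m N : ℕ)
    (hint2 : ∀ u v, IntervalIntegrable (fun t => U a h f m t ^ 2) volume u v)
    (hzeros : ∀ k : ℕ, U a h f (m + 1) (a + (k : ℝ) * (2 * h) + h) = 0) :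
    (∫ x in a..(a + (N : ℝ) * (2 * h)), U a h f (m + 1) x ^ 2)
      ≤ 2 * h ^ 2 * ∫ x in a..(a + (N : ℝ) * (2 * h)), U a h f m x ^ 2 := by
  set ptn : ℕ → ℝ := fun k => a + (k : ℝ) * (2 * h) with hptn
  have hptn0 : ptn 0 = a := by simp [hptn]
  have hsum1 : (∑ k ∈ Finset.range N, ∫ x in ptn k..ptn (k+1), U a h f (m + 1) x ^ 2)
      = ∫ x in (ptn 0)..(ptn N), U a h f (m + 1) x ^ 2 := by
    apply intervalIntegral.sum_integral_adjacent_intervals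
    intro k _
    exact ((Ucont (a:=a) (h:=h) hfi m).pow 2).intervalIntegrable _ _
  have hsum2 : (∑ k ∈ Finset.range N, ∫ x in ptn k..ptn (k+1), U a h f m x ^ 2)
      = ∫ x in (ptn 0)..(ptn N), U a h f m x ^ 2 := by
    apply intervalIntegral.sum_integral_adjacent_intervals
    intro k _
    exact hint2 _ _
  have hcell : ∀ k ∈ Finset.range N,
      (∫ x in ptn k..ptn (k+1), U a h f (m + 1) x ^ 2)
        ≤ 2 * h ^ 2 * ∫ x in ptn k..ptn (k+1), U a h f m x ^ 2 := by
    intro k _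
    have := cellBound hfi hh m k hint2 (hzeros k)
    have e1 : ptn (k+1) = a + ((k : ℝ) + 1) * (2 * h) := by rw [hptn]; push_cast; ring
    rw [hptn0] at *
    simpa [hptn, e1] using this
  calc (∫ x in a..(a + (N : ℝ) * (2 * h)), U a h f (m + 1) x ^ 2)
      = ∑ k ∈ Finset.range N, ∫ x in ptn k..ptn (k+1), U a h f (m + 1) x ^ 2 := by
        rw [hsum1, hptn0]
    _ ≤ ∑ k ∈ Finset.range N, 2 * h ^ 2 * ∫ x in ptn k..ptn (k+1), U a h f m x ^ 2 :=
        Finset.sum_le_sum hcell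
    _ = 2 * h ^ 2 * ∑ k ∈ Finset.range N, ∫ x in ptn k..ptn (k+1), U a h f m x ^ 2 := by
        rw [Finset.mul_sum]
    _ = 2 * h ^ 2 * ∫ x in a..(a + (N : ℝ) * (2 * h)), U a h f m x ^ 2 := by
        rw [hsum2, hptn0]
end





section
variable {a h : ℝ} {f : ℝ → ℝ}

lemma Uwithin (hfi : ∀ u v, IntervalIntegrable f volume u v) (hfm : Measurable f)
    {A B : ℝ} (hAB : A < B) (m : ℕ) :
    ∀ k ≤ m, ∀ x ∈ Icc A B,
      iteratedDerivWithin k (U a h f (m + 1)) (Icc A B) x = U a h f (m + 1 - k) x := by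
  intro k
  induction k with
  | zero => intro _ x _; rw [iteratedDerivWithin_zero, Nat.sub_zero]
  | succ j ih =>
    intro hk x hx
    have hj : j ≤ m := by omega
    rw [iteratedDerivWithin_succ]
    rw [derivWithin_congr (fun y hy => ih hj y hy) (ih hj x hx)]
    obtain ⟨q, hq⟩ : ∃ q, m + 1 - j = q + 2 := ⟨m - j - 1, by omega⟩
    rw [hq]
    rw [(UhasDeriv' hfi hfm q x).differentiableAt.derivWithin ((uniqueDiffOn_Icc hAB) x hx)]
    rw [(UhasDeriv' hfi hfm q x).deriv]
    congr 1
    omega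
end


lemma noKnot {a h d : ℝ} (hh : 0 < h) (hd : d = 0 ∨ d = h) :
    ∀ x ∈ Ioo a (a + h), x ∉ sqwKnots a h d := by
  rintro x hx ⟨k, hk⟩
  simp only at hk
  have hx1 := hx.1
  have hx2 := hx.2
  have hub : (k : ℝ) * (2 * h) < 2 * h := by
    rcases hd with rfl | rfl <;> linarith
  have hlb : 0 < (k : ℝ) * (2 * h) := by
    rcases hd with rfl | rfl <;> linarith
  have hk1 : (0 : ℝ) < (k : ℝ) := by nlinarith
  have hk2 : (k : ℝ) < 1 := by nlinarith
  have : (0 : ℤ) < k := by exact_mod_cast hk1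
  have : (1 : ℤ) ≤ k := this
  have : (1 : ℝ) ≤ (k : ℝ) := by exact_mod_cast this
  linarith

theorem master (a b h : ℝ) (m n : ℕ) (d e : ℝ)
    (hab : a < b) (hh : 0 < h) (hn : 0 < n)
    (hgrid : b - a = n * (2 * h))
    (hde : d = 0 ∧ e = -1 ∨ d = h ∧ e = 1)
    (hep : e * (-1 : ℝ) ^ (m + 1) = 1) :
    ∃ u : ℝ → ℝ, IsReducedSplineOn (m + 1) (2 * n) h a b u ∧
      (¬ ∃ c : ℝ, ∀ x ∈ Set.Icc a b, u x = c) ∧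
      (1 / (2 * Real.sqrt 2)) * h⁻¹ * L2 a b u ≤ L2 a b (deriv u) := by
  have hd : d = 0 ∨ d = h := by
    rcases hde with ⟨rfl, _⟩ | ⟨rfl, _⟩; exacts [Or.inl rfl, Or.inr rfl]
  have he : e = 1 ∨ e = -1 := by
    rcases hde with ⟨_, rfl⟩ | ⟨_, rfl⟩; exacts [Or.inr rfl, Or.inl rfl]
  set f : ℝ → ℝ := sqw a h d with hf
  have hfi : ∀ u v, IntervalIntegrable f volume u v := sqw_intervalIntegrable a h d
  have hfm : Measurable f := sqw_measurable a h d
  have hfa : ∀ x, f (x + 2 * h) = - f x := sqw_anti a h d hh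
  have hknull : ∀ᵐ x : ℝ, x ∉ sqwKnots a h d :=
    measure_eq_zero_iff_ae_notMem.mp ((sqwKnots_countable a h d).measure_zero _)
  have hfr : ∀ᵐ x : ℝ, f (2 * a - x) = e * f x := by
    filter_upwards [hknull] with x hx
    rcases hde with ⟨rfl, rfl⟩ | ⟨rfl, rfl⟩
    · rw [hf, sqw_refl0 hh hx]; ring
    · rw [hf, sqw_reflh hh hx]; ring
  have hpc : ∀ (j : ℕ), ∀ x ∈ Ico (a + (j : ℝ) * h) (a + ((j : ℝ) + 1) * h),
      f x = f (a + (j : ℝ) * h) := by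
    intro j
    rcases hd with rfl | rfl
    · exact sqw_piece hh (c := 0) (by ring) j
    · exact sqw_piece hh (c := 1) (by ring) j
  have hpc0 : ∀ t ∈ Ico a (a + h), f t = f a := by
    intro t ht
    have e0 : a + ((0 : ℕ) : ℝ) * h = a := by norm_num
    have e1 : a + (((0 : ℕ) : ℝ) + 1) * h = a + h := by norm_num
    have := hpc 0 t (by rw [e0, e1]; exact ht)
    rwa [e0] at this
  have hpc1 : ∀ t ∈ Ico (a + h) (a + 2 * h), f t = f (a + h) := by
    intro t ht
    have e0 : a + ((1 : ℕ) : ℝ) * h = a + h := by norm_num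
    have e1 : a + (((1 : ℕ) : ℝ) + 1) * h = a + 2 * h := by push_cast; ring
    have := hpc 1 t (by rw [e0, e1]; exact ht)
    rwa [e0] at this
  have hfz : e = 1 → (∫ t in a..(a + 2 * h), f t) = 0 := by
    intro he1
    have hdh : d = h := by
      rcases hde with ⟨_, hee⟩ | ⟨rfl, _⟩
      · rw [he1] at hee; norm_num at hee
      · rfl
    have hva : f a = 1 := by
      rw [hf, hdh]
      unfold sqw
      rw [show (a - a + h) / (2 * h) = 1 / 2 by rw [div_eq_div_iff (by linarith) (by norm_num)]; ring]
      norm_num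
    have hvb : f (a + h) = -1 := by
      rw [hf, hdh]
      unfold sqw
      rw [show (a + h - a + h) / (2 * h) = 1 by field_simp; ring]
      norm_num
    have hsplit : (∫ t in a..(a + 2 * h), f t)
        = (∫ t in a..(a + h), f t) + ∫ t in (a + h)..(a + 2 * h), f t :=
      (integral_add_adjacent_intervals (hfi _ _) (hfi _ _)).symm
    have hI1 : (∫ t in a..(a + h), f t) = f a * h := by
      rw [integral_const_on_Ico hpc0 (by linarith) le_rfl]; ring
    have hI2 : (∫ t in (a + h)..(a + 2 * h), f t) = f (a + h) * h := by
      rw [integral_const_on_Ico hpc1 (by linarith) le_rfl]; ring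
    rw [hsplit, hI1, hI2, hva, hvb]; ring
  -- the spline
  set u : ℝ → ℝ := U a h f (m + 1) with hu
  have hb : b = a + (n : ℝ) * (2 * h) := by linarith
  have hanb : a + h ≤ b := by
    have h1 : (1 : ℝ) ≤ (n : ℝ) := by exact_mod_cast hn
    nlinarith
  -- derivative facts
  have hDat : ∀ q : ℕ, ∀ x : ℝ, x ∉ sqwKnots a h d →
      HasDerivAt (U a h f (q + 1)) (U a h f q x) x := by
    intro q x hx
    apply UhasDeriv hfi hfm
    cases q with
    | zero => exact sqw_continuousAt hh hx
    | succ r => exact (Ucont hfi r).continuousAt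
  -- oddness about a + h, zeros
  have hodd : ∀ y : ℝ, U a h f (m + 1) (2 * (a + h) - y) = - U a h f (m + 1) y := by
    intro y
    have e1 : 2 * (a + h) - y = 2 * a - (y - 2 * h) := by ring
    rw [e1, Uparity hfi hfa he hfr hfz m (y - 2 * h), hep, one_mul]
    have e2 : y - 2 * h + 2 * h = y := by ring
    have h2 := Uanti (a := a) hfi hfa (m + 1) (y - 2 * h)
    rw [e2] at h2
    linarith
  have hz0 : U a h f (m + 1) (a + h) = 0 := by
    have := hodd (a + h)
    rw [show 2 * (a + h) - (a + h) = a + h by ring] at this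
    linarith
  have hzeros : ∀ k : ℕ, U a h f (m + 1) (a + (k : ℝ) * (2 * h) + h) = 0 := by
    intro k
    have e1 : a + (k : ℝ) * (2 * h) + h = (a + h) + (k : ℝ) * (2 * h) := by ring
    rw [e1, UantiN hfi hfa, hz0, mul_zero]
  -- nonconstancy
  have hnonconst : ¬ ∃ c : ℝ, ∀ x ∈ Set.Icc a b, u x = c := by
    rintro ⟨c0, hc0⟩
    have step : ∀ (q : ℕ) (c : ℝ), (∀ x ∈ Ioo a (a + h), U a h f (q + 1) x = c) →
        ∀ x ∈ Ioo a (a + h), U a h f q x = 0 := by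
      intro q c hconst x hx
      have hev : U a h f (q + 1) =ᶠ[nhds x] fun _ => c := by
        filter_upwards [Ioo_mem_nhds hx.1 hx.2] with y hy using hconst y hy
      have h1 : deriv (U a h f (q + 1)) x = 0 := by
        rw [hev.deriv_eq]; exact deriv_const x c
      rw [← (hDat q x (noKnot hh hd x hx)).deriv]
      exact h1
    have h0 : ∀ x ∈ Ioo a (a + h), U a h f (m + 1) x = c0 := fun x hx =>
      hc0 x ⟨le_of_lt hx.1, le_trans (le_of_lt hx.2) hanb⟩
    have hall : ∀ i ≤ m, ∀ x ∈ Ioo a (a + h), U a h f (m - i) x = 0 := by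
      intro i
      induction i with
      | zero => intro _; simpa using step m c0 h0
      | succ j ih =>
        intro hj x hx
        have e1 : m - j = (m - (j + 1)) + 1 := by omega
        apply step (m - (j + 1)) 0 _ x hx
        intro y hy
        have := ih (by omega) y hy
        rwa [e1] at this
    have hmid : (a + h / 2) ∈ Ioo a (a + h) := ⟨by linarith, by linarith⟩
    have := hall m le_rfl (a + h / 2) hmid
    rw [Nat.sub_self] at this
    exact sqw_ne_zero a h d _ this
  -- spline structure
  have hspline : IsSplineOn (m + 1) (2 * n) h a b u := by
    constructor
    · have h1 : ContDiff ℝ ((m : ℕ) : WithTop ℕ∞) u := UcontDiff hfi hfm m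
      have e1 : (m + 1 - 1 : ℕ) = m := rfl
      rw [e1]
      exact h1.contDiffOn
    · intro j _
      exact Upoly hfi hpc hh m j
  -- reduced conditions
  have hreduced : ∀ l : ℕ, 2 * l + 1 < m + 1 →
      iteratedDerivWithin (2 * l + 1) u (Set.Icc a b) a = 0 ∧
      iteratedDerivWithin (2 * l + 1) u (Set.Icc a b) b = 0 := by
    intro l hl
    have hk : 2 * l + 1 ≤ m := by omega
    obtain ⟨r, hr⟩ : ∃ r, m + 1 - (2 * l + 1) = r + 1 := ⟨m - (2 * l + 1), by omega⟩
    have hEr : e * (-1 : ℝ) ^ (r + 1) = -1 := by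
      have hsum : (r + 1) + (2 * l + 1) = m + 1 := by omega
      have hpow : (-1 : ℝ) ^ (m + 1) = (-1 : ℝ) ^ (r + 1) * (-1 : ℝ) ^ (2 * l + 1) := by
        rw [← pow_add, hsum]
      have hoddp : (-1 : ℝ) ^ (2 * l + 1) = -1 := Odd.neg_one_pow ⟨l, by ring⟩
      rw [hpow, hoddp] at hep
      linarith [hep]
    have hUa : U a h f (r + 1) a = 0 := by
      have := Uparity hfi hfa he hfr hfz r a
      rw [show 2 * a - a = a by ring, hEr] at this
      linarith
    have hUb : U a h f (r + 1) b = 0 := by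
      rw [hb, UantiN hfi hfa, hUa, mul_zero]
    constructor
    · rw [Uwithin hfi hfm hab m (2 * l + 1) hk a ⟨le_refl a, hab.le⟩, hr, hUa]
    · rw [Uwithin hfi hfm hab m (2 * l + 1) hk b ⟨hab.le, le_refl b⟩, hr, hUb]
  -- the inequality
  have hint2 : ∀ u v, IntervalIntegrable (fun t => U a h f m t ^ 2) volume u v := by
    cases m with
    | zero =>
      intro u v
      have e1 : (fun t => U a h f 0 t ^ 2) = fun _ : ℝ => (1 : ℝ) := by
        funext t; exact sqw_sq a h d t
      rw [e1]
      exact intervalIntegrable_const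
    | succ r => exact fun u v => ((Ucont hfi r).pow 2).intervalIntegrable u v
  have hXY := totalBound hfi hh m n hint2 hzeros
  have hIoo : ∀ g : ℝ → ℝ, (∫ x in Ioo a b, g x) = ∫ x in a..b, g x := by
    intro g
    rw [intervalIntegral.integral_of_le hab.le, MeasureTheory.integral_Ioc_eq_integral_Ioo]
  have hderiv_ae : ∀ᵐ x : ℝ, deriv u x = U a h f m x := by
    filter_upwards [hknull] with x hx
    exact (hDat m x hx).deriv
  set X := ∫ x in Ioo a b, u x ^ 2 with hX
  set Y := ∫ x in Ioo a b, U a h f m x ^ 2 with hY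
  have hDint : (∫ x in Ioo a b, deriv u x ^ 2) = Y := by
    apply MeasureTheory.integral_congr_ae
    apply Filter.EventuallyEq.restrict
    filter_upwards [hderiv_ae] with x hx
    rw [hx]
  have hXb : X ≤ 2 * h ^ 2 * Y := by
    rw [hX, hY, hIoo, hIoo, hb]
    exact hXY
  have hYnn : 0 ≤ Y :=
    MeasureTheory.setIntegral_nonneg measurableSet_Ioo (fun x _ => sq_nonneg _)
  have hXnn : 0 ≤ X :=
    MeasureTheory.setIntegral_nonneg measurableSet_Ioo (fun x _ => sq_nonneg _)
  refine ⟨u, ⟨hspline, hreduced⟩, hnonconst, ?_⟩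
  show (1 / (2 * Real.sqrt 2)) * h⁻¹ * Real.sqrt X ≤ Real.sqrt (∫ x in Ioo a b, deriv u x ^ 2)
  rw [hDint]
  have hs2 : (0 : ℝ) < Real.sqrt 2 := Real.sqrt_pos.mpr (by norm_num)
  have h1 : Real.sqrt X ≤ Real.sqrt (2 * h ^ 2 * Y) := Real.sqrt_le_sqrt hXb
  have h2 : Real.sqrt (2 * h ^ 2 * Y) = Real.sqrt 2 * h * Real.sqrt Y := by
    rw [show 2 * h ^ 2 * Y = (Real.sqrt 2 * h) ^ 2 * Y by
      rw [mul_pow, Real.sq_sqrt (by norm_num : (0:ℝ) ≤ 2)]]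
    rw [Real.sqrt_mul (by positivity), Real.sqrt_sq (by positivity)]
  have h3 : Real.sqrt X ≤ Real.sqrt 2 * h * Real.sqrt Y := h2 ▸ h1
  have hcnn : (0 : ℝ) ≤ 1 / (2 * Real.sqrt 2) * h⁻¹ :=
    mul_nonneg (by positivity) (inv_nonneg.mpr hh.le)
  calc (1 / (2 * Real.sqrt 2)) * h⁻¹ * Real.sqrt X
      ≤ (1 / (2 * Real.sqrt 2)) * h⁻¹ * (Real.sqrt 2 * h * Real.sqrt Y) := by
        exact mul_le_mul_of_nonneg_left h3 hcnn
    _ = (1 / 2) * Real.sqrt Y := by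
        field_simp
    _ ≤ Real.sqrt Y := by nlinarith [Real.sqrt_nonneg Y]



/-- Corollary 3 of the paper: the inverse inequality on the reduced
spline space is sharp up to a constant. Here `(b−a)/(2h) = n`, so the grid of size `h`
has `2n` subintervals. -/
theorem inverse_inequality_sharp (a b h : ℝ) (p n : ℕ)
    (hab : a < b) (hp : 1 ≤ p) (hh : 0 < h) (hn : 0 < n)
    (hgrid : b - a = n * (2 * h)) (hhp : 2 * h * p < b - a) :
    ∃ u : ℝ → ℝ, IsReducedSplineOn p (2 * n) h a b u ∧
      (¬ ∃ c : ℝ, ∀ x ∈ Set.Icc a b, u x = c) ∧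
      (1 / (2 * Real.sqrt 2)) * h⁻¹ * L2 a b u ≤ L2 a b (deriv u) := by
  obtain ⟨m, rfl⟩ : ∃ m, p = m + 1 := ⟨p - 1, by omega⟩
  rcases Nat.even_or_odd (m + 1) with hpe | hpo
  · exact master a b h m n h 1 hab hh hn hgrid (Or.inr ⟨rfl, rfl⟩)
      (by rw [hpe.neg_one_pow]; ring)
  · exact master a b h m n 0 (-1) hab hh hn hgrid (Or.inl ⟨rfl, rfl⟩)
      (by rw [hpo.neg_one_pow]; ring)
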